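/- Let k, ℓ > 0, let π1 ∈ T_k and π2 ∈ T_ℓ, let 1 ≤ i ≤ slmax(π2), and let π = C2(π1, π2, i). Then lmax(π) = lmax(π1) + 1, rmax(π) = 1 + rmax(π2), asc(π) = asc(π1) + 1 + asc(π2), des(π) = des(π1) + 1 + des(π2), len(π) = len(π1) + 1 + len(π2), and sldes(π) = sldes(π1) + sldes(π2) + 1. -/

import Mathlib

namespace TSP

theorem foldr_max_mem {α : Type} [LinearOrder α] (x : α) (l : List α) :
    l.foldr max x ∈ x :: l := by
  induction l with
  | nil => simp
  | cons a t ih =>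
    simp only [List.foldr_cons]
    rcases max_choice a (t.foldr max x) with h | h <;> rw [h]
    · simp
    · rcases List.mem_cons.mp ih with h' | h'
      · rw [h']; simp
      · exact List.mem_cons.mpr (Or.inr (List.mem_cons.mpr (Or.inr h')))

theorem length_takeWhile_lt {α : Type} [DecidableEq α] {m : α} {l : List α}
    (h : m ∈ l) : (l.takeWhile (· ≠ m)).length < l.length := by
  have hd : l.dropWhile (· ≠ m) ≠ [] := by
    intro hnil
    have := List.dropWhile_eq_nil_iff.mp hnil m h
    simp at this
  have hsum : (l.takeWhile (· ≠ m)).length + (l.dropWhile (· ≠ m)).length = l.length := by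
    rw [← List.length_append, List.takeWhile_append_dropWhile]
  have : 0 < (l.dropWhile (· ≠ m)).length := List.length_pos_iff.mpr hd
  omega

theorem length_tail_dropWhile_lt {α : Type} [DecidableEq α] {m : α} {l : List α}
    (h : l ≠ []) : ((l.dropWhile (· ≠ m)).tail).length < l.length := by
  have hsum : (l.takeWhile (· ≠ m)).length + (l.dropWhile (· ≠ m)).length = l.length := by
    rw [← List.length_append, List.takeWhile_append_dropWhile]
  have h2 : ((l.dropWhile (· ≠ m)).tail).length = (l.dropWhile (· ≠ m)).length - 1 :=
    List.length_tail
  have : 0 < l.length := List.length_pos_iff.mpr h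
  omega

/-- The stack-sorting operator `S`: `S(ε) = ε`, and if `A` is nonempty with
largest element `m` and `A = A_L · (m) · A_R`, then `S(A) = S(A_L) · S(A_R) · (m)`. -/
def S {α : Type} [LinearOrder α] : List α → List α
  | [] => []
  | x :: l =>
    let m := l.foldr max x
    S ((x :: l).takeWhile (· ≠ m)) ++ S (((x :: l).dropWhile (· ≠ m)).tail) ++ [m]
termination_by l => l.length
decreasing_by
  · have hm := foldr_max_mem x l
    rw [← List.foldr_attach (f := max)] at hm
    exact length_takeWhile_lt hm
  · exact length_tail_dropWhile_lt (by simp)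

/-- The identity permutation `id_n = (1, 2, …, n)` as a list. -/
def idPerm (n : ℕ) : List ℕ := List.range' 1 n

/-- `l` is a permutation of `{1, …, n}` (viewed as a sequence). -/
def IsPermOf (n : ℕ) (l : List ℕ) : Prop := l.Perm (idPerm n)

/-- `l` is a two-stack sortable permutation (of `{1, …, len l}`). -/
def Is2SS (l : List ℕ) : Prop := IsPermOf l.length l ∧ S (S l) = idPerm l.length

/-- `σ^{+k}`: add `k` to every entry. -/
def shift (k : ℕ) (l : List ℕ) : List ℕ := l.map (· + k)

/-- `σ^{+(k1,m,k2)}`: add `k1` to every entry strictly smaller than `m`, `k2` to the others. -/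
def shift3 (k1 m k2 : ℕ) (l : List ℕ) : List ℕ :=
  l.map (fun a => if a < m then a + k1 else a + k2)

/-- Standardization `P(A)`: the permutation of `{1,…,len A}` in the same relative order. -/
def stand (l : List ℕ) : List ℕ := l.map (fun a => (l.filter (fun b => b ≤ a)).length)

/-- Avoidance of the pattern 231: no positions `i < j < k` with `l(k) < l(i) < l(j)`. -/
def Avoids231 (l : List ℕ) : Prop :=
  ¬ ∃ i j k, i < j ∧ j < k ∧ k < l.length ∧
      l.getD k 0 < l.getD i 0 ∧ l.getD i 0 < l.getD j 0

/-- The list of values of the left-to-right maxima of `l`, in order. -/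
def lrMaxima (l : List ℕ) : List ℕ :=
  ((List.range l.length).filter
    (fun i => (l.take i).all (fun b => b < l.getD i 0))).map (fun i => l.getD i 0)

/-- `lmax`: the number of left-to-right maxima. -/
def lmax (l : List ℕ) : ℕ :=
  (List.range l.length).countP (fun i => (l.take i).all (fun b => b < l.getD i 0))

/-- `rmax`: the number of right-to-left maxima. -/
def rmax (l : List ℕ) : ℕ :=
  (List.range l.length).countP (fun i => (l.drop (i+1)).all (fun b => b < l.getD i 0))

/-- `asc`: the number of ascents. -/
def asc (l : List ℕ) : ℕ :=
  (List.range (l.length - 1)).countP (fun i => l.getD i 0 < l.getD (i+1) 0)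

/-- `des`: the number of descents. -/
def des (l : List ℕ) : ℕ :=
  (List.range (l.length - 1)).countP (fun i => l.getD (i+1) 0 < l.getD i 0)

/-- `slmax(π)`: the number of left-to-right maxima of `S(π)`. -/
def slmax (l : List ℕ) : ℕ := lmax (S l)

/-- `sldes(π)`: the number of entries `a` that precede `a - 1` in `S(π)`. -/
def sldes (l : List ℕ) : ℕ :=
  (List.range (S l).length).countP
    (fun i => ((S l).drop (i+1)).any (fun b => b + 1 = (S l).getD i 0))

/-- The construction `C1(π1, π2) = π1 · (k+ℓ+1) · π2^{+k}`. -/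
def C1 (p1 p2 : List ℕ) : List ℕ :=
  p1 ++ (p1.length + p2.length + 1) :: shift p1.length p2

/-- The `i`-th left-to-right maximum `a_i` of `S(π2)` (1-indexed). -/
def lrm (p2 : List ℕ) (i : ℕ) : ℕ := (lrMaxima (S p2)).getD (i - 1) 0

/-- The construction `C2(π1, π2, i) = π1^{+(0,k,a_i)} · (k+ℓ+1) · π2^{+(k-1,a_i+1,k)}`. -/
def C2 (p1 p2 : List ℕ) (i : ℕ) : List ℕ :=
  shift3 0 p1.length (lrm p2 i) p1 ++
    (p1.length + p2.length + 1) :: shift3 (p1.length - 1) (lrm p2 i + 1) p1.length p2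

/-- The decomposition `D(π) = (P(π_ℓ), P(π_r))`, where `π = π_ℓ · (n) · π_r`
with `n` the largest entry of `π`. -/
def D (l : List ℕ) : List ℕ × List ℕ :=
  match l with
  | [] => ([], [])
  | x :: t =>
    let m := t.foldr max x
    (stand ((x :: t).takeWhile (· ≠ m)), stand (((x :: t).dropWhile (· ≠ m)).tail))



/-! ### Auxiliary lemmas -/

section Aux

lemma self_le_foldr_max {α : Type} [LinearOrder α] (x : α) (l : List α) :
    x ≤ l.foldr max x := by
  induction l with
  | nil => simp
  | cons a t ih => exact le_max_of_le_right ih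

lemma le_foldr_max_of_mem {α : Type} [LinearOrder α] {y : α} (x : α) {l : List α}
    (h : y ∈ l) : y ≤ l.foldr max x := by
  induction l with
  | nil => simp at h
  | cons a t ih =>
    rcases List.mem_cons.mp h with h | h
    · subst h; exact le_max_left _ _
    · exact le_max_of_le_right (ih h)

lemma le_foldr_max {α : Type} [LinearOrder α] {y x : α} {l : List α} (h : y ∈ x :: l) :
    y ≤ l.foldr max x := by
  rcases List.mem_cons.mp h with h | h
  · subst h; exact self_le_foldr_max _ _
  · exact le_foldr_max_of_mem _ h

lemma foldr_max_eq {α : Type} [LinearOrder α] {x N : α} {l : List α}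
    (hmem : N ∈ x :: l) (hub : ∀ y ∈ x :: l, y ≤ N) : l.foldr max x = N :=
  le_antisymm (hub _ (foldr_max_mem x l)) (le_foldr_max hmem)

lemma S_cons {α : Type} [LinearOrder α] (x : α) (l : List α) :
    S (x :: l) = S ((x :: l).takeWhile (· ≠ l.foldr max x)) ++
      S (((x :: l).dropWhile (· ≠ l.foldr max x)).tail) ++ [l.foldr max x] := by
  rw [S]

lemma S_nil {α : Type} [LinearOrder α] : S ([] : List α) = [] := by rw [S]

lemma dropWhile_ne_cons {α : Type} [LinearOrder α] {m : α} :
    ∀ {l : List α}, m ∈ l → l.dropWhile (· ≠ m) = m :: (l.dropWhile (· ≠ m)).tail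
  | a :: t, h => by
    by_cases ha : a = m
    · subst ha; simp [List.dropWhile_cons]
    · have hm : m ∈ t := by
        rcases List.mem_cons.mp h with h | h
        · exact absurd h.symm ha
        · exact h
      have hpa : (decide (a ≠ m)) = true := by simp [ha]
      rw [List.dropWhile_cons, hpa, if_pos rfl]
      exact dropWhile_ne_cons hm

lemma S_perm {α : Type} [LinearOrder α] : ∀ l : List α, (S l).Perm l
  | [] => by rw [S_nil]
  | x :: l => by
    rw [S_cons]
    set m := l.foldr max x with hm
    have hmem : m ∈ x :: l := foldr_max_mem x l
    have h1 := S_perm ((x :: l).takeWhile (· ≠ m))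
    have h2 := S_perm (((x :: l).dropWhile (· ≠ m)).tail)
    have hsplit : (x :: l) = (x :: l).takeWhile (· ≠ m) ++
        (m :: ((x :: l).dropWhile (· ≠ m)).tail) := by
      conv_lhs => rw [← List.takeWhile_append_dropWhile (p := (· ≠ m)) (l := x :: l)]
      rw [← dropWhile_ne_cons hmem]
    have h3 : (S ((x :: l).takeWhile (· ≠ m)) ++ S (((x :: l).dropWhile (· ≠ m)).tail)
        ++ [m]).Perm ((x :: l).takeWhile (· ≠ m) ++
          ((((x :: l).dropWhile (· ≠ m)).tail) ++ [m])) := by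
      rw [List.append_assoc]
      exact h1.append (h2.append (List.Perm.refl [m]))
    have h4 : ((x :: l).takeWhile (· ≠ m) ++ ((((x :: l).dropWhile (· ≠ m)).tail) ++ [m])).Perm
        ((x :: l).takeWhile (· ≠ m) ++ (m :: (((x :: l).dropWhile (· ≠ m)).tail))) :=
      List.Perm.append_left _ (List.perm_append_singleton _ _)
    exact (h3.trans h4).trans (hsplit ▸ List.Perm.refl _)
termination_by l => l.length
decreasing_by
  · exact length_takeWhile_lt (foldr_max_mem x l)
  · exact length_tail_dropWhile_lt (by simp)

lemma foldr_max_map {f : ℕ → ℕ} (hf : Monotone f) (x : ℕ) (l : List ℕ) :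
    (l.map f).foldr max (f x) = f (l.foldr max x) := by
  induction l with
  | nil => rfl
  | cons a t ih => simp only [List.map_cons, List.foldr_cons, ih, hf.map_max]

lemma takeWhile_ne_map {f : ℕ → ℕ} (hf : Function.Injective f) (m : ℕ) (l : List ℕ) :
    (l.map f).takeWhile (· ≠ f m) = (l.takeWhile (· ≠ m)).map f := by
  rw [List.takeWhile_map]
  have hp : ((fun b => (b ≠ f m : Bool)) ∘ f) = fun b => (b ≠ m : Bool) := by
    funext y
    simp [Function.comp, hf.ne_iff]
  rw [hp]

lemma dropWhile_ne_map {f : ℕ → ℕ} (hf : Function.Injective f) (m : ℕ) (l : List ℕ) :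
    (l.map f).dropWhile (· ≠ f m) = (l.dropWhile (· ≠ m)).map f := by
  rw [List.dropWhile_map]
  have hp : ((fun b => (b ≠ f m : Bool)) ∘ f) = fun b => (b ≠ m : Bool) := by
    funext y
    simp [Function.comp, hf.ne_iff]
  rw [hp]

lemma S_map {f : ℕ → ℕ} (hf : StrictMono f) : ∀ l : List ℕ, S (l.map f) = (S l).map f
  | [] => by rw [List.map_nil, S_nil]; rfl
  | x :: l => by
    rw [List.map_cons, S_cons, S_cons]
    have hfm : (l.map f).foldr max (f x) = f (l.foldr max x) :=
      foldr_max_map hf.monotone x l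
    rw [hfm, ← List.map_cons, takeWhile_ne_map hf.injective, dropWhile_ne_map hf.injective,
      ← List.map_tail, S_map hf ((x :: l).takeWhile (· ≠ l.foldr max x)),
      S_map hf (((x :: l).dropWhile (· ≠ l.foldr max x)).tail)]
    simp [List.map_append]
termination_by l => l.length
decreasing_by
  · exact length_takeWhile_lt (foldr_max_mem x l)
  · exact length_tail_dropWhile_lt (by simp)

lemma S_sandwich (A B : List ℕ) (N : ℕ) (hA : ∀ y ∈ A, y < N) (hB : ∀ y ∈ B, y < N) :
    S (A ++ N :: B) = S A ++ S B ++ [N] := by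
  have htake : (A ++ N :: B).takeWhile (· ≠ N) = A := by
    rw [List.takeWhile_append]
    have hAall : A.takeWhile (· ≠ N) = A :=
      List.takeWhile_eq_self_iff.mpr (fun y hy => by simpa using (hA y hy).ne)
    rw [hAall, if_pos rfl, List.takeWhile_cons]
    simp
  have hdrop : (A ++ N :: B).dropWhile (· ≠ N) = N :: B := by
    rw [List.dropWhile_append]
    have hAall : A.dropWhile (· ≠ N) = [] :=
      List.dropWhile_eq_nil_iff.mpr (fun y hy => by simpa using (hA y hy).ne)
    rw [hAall]
    simp only [List.isEmpty_nil, if_true, List.dropWhile_cons]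
    simp
  rcases hE : A ++ N :: B with _ | ⟨x, t⟩
  · exact absurd hE (by simp)
  · have hmem : N ∈ x :: t := by rw [← hE]; simp
    have hub : ∀ y ∈ x :: t, y ≤ N := by
      rw [← hE]
      intro y hy
      rcases List.mem_append.mp hy with h | h
      · exact (hA y h).le
      · rcases List.mem_cons.mp h with h | h
        · exact h.le
        · exact (hB y h).le
    have hmax : t.foldr max x = N := foldr_max_eq hmem hub
    rw [S_cons, hmax, ← hE, htake, hdrop]
    rfl

lemma countP_range_add (a b : ℕ) (p : ℕ → Bool) :
    (List.range (a + b)).countP p =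
      (List.range a).countP p + (List.range b).countP (fun j => p (a + j)) := by
  rw [List.range_add, List.countP_append, List.countP_map]
  rfl

lemma countP_range_congr {n : ℕ} {p q : ℕ → Bool} (h : ∀ i < n, p i = q i) :
    (List.range n).countP p = (List.range n).countP q :=
  List.countP_congr (fun i hi => by rw [h i (List.mem_range.mp hi)])

lemma countP_range_zero {n : ℕ} {p : ℕ → Bool} (h : ∀ i < n, p i = false) :
    (List.range n).countP p = 0 :=
  List.countP_eq_zero.mpr (fun i hi => by simp [h i (List.mem_range.mp hi)])

lemma countP_range_succ_shift (n : ℕ) (p : ℕ → Bool) :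
    (List.range (n + 1)).countP p =
      (if p 0 then 1 else 0) + (List.range n).countP (fun j => p (j + 1)) := by
  rw [List.range_succ_eq_map, List.countP_cons, List.countP_map]
  have : (p ∘ Nat.succ) = fun j => p (j + 1) := rfl
  rw [this]
  omega

lemma getD_map_lt {f : ℕ → ℕ} {l : List ℕ} {i : ℕ} (h : i < l.length) :
    (l.map f).getD i 0 = f (l.getD i 0) := by
  rw [List.getD_eq_getElem _ _ (by simpa using h), List.getD_eq_getElem _ _ h,
    List.getElem_map]

lemma lmax_map {f : ℕ → ℕ} (hf : StrictMono f) (l : List ℕ) : lmax (l.map f) = lmax l := by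
  unfold lmax
  rw [List.length_map]
  apply countP_range_congr
  intro i hi
  apply Bool.coe_iff_coe.mp
  rw [getD_map_lt hi, ← List.map_take, List.all_map]
  simp only [List.all_eq_true, Function.comp, decide_eq_true_eq, hf.lt_iff_lt]

lemma rmax_map {f : ℕ → ℕ} (hf : StrictMono f) (l : List ℕ) : rmax (l.map f) = rmax l := by
  unfold rmax
  rw [List.length_map]
  apply countP_range_congr
  intro i hi
  apply Bool.coe_iff_coe.mp
  rw [getD_map_lt hi, ← List.map_drop, List.all_map]
  simp only [List.all_eq_true, Function.comp, decide_eq_true_eq, hf.lt_iff_lt]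

lemma asc_map {f : ℕ → ℕ} (hf : StrictMono f) (l : List ℕ) : asc (l.map f) = asc l := by
  unfold asc
  rw [List.length_map]
  apply countP_range_congr
  intro i hi
  apply Bool.coe_iff_coe.mp
  rw [getD_map_lt (by omega), getD_map_lt (by omega)]
  simp only [decide_eq_true_eq, hf.lt_iff_lt]

lemma des_map {f : ℕ → ℕ} (hf : StrictMono f) (l : List ℕ) : des (l.map f) = des l := by
  unfold des
  rw [List.length_map]
  apply countP_range_congr
  intro i hi
  apply Bool.coe_iff_coe.mp
  rw [getD_map_lt (by omega), getD_map_lt (by omega)]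
  simp only [decide_eq_true_eq, hf.lt_iff_lt]

lemma getD_swL {A B : List ℕ} {N i : ℕ} (h : i < A.length) :
    (A ++ N :: B).getD i 0 = A.getD i 0 :=
  List.getD_append _ _ _ _ h

lemma getD_swR (A B : List ℕ) (N j : ℕ) :
    (A ++ N :: B).getD (A.length + j) 0 = (N :: B).getD j 0 := by
  rw [List.getD_append_right _ _ _ _ (Nat.le_add_right _ _), Nat.add_sub_cancel_left]

lemma length_sw (A B : List ℕ) (N : ℕ) :
    (A ++ N :: B).length = A.length + (B.length + 1) := by
  simp [List.length_append]

lemma lmax_sandwich (A B : List ℕ) (N : ℕ) (hA : ∀ y ∈ A, y < N) (hB : ∀ y ∈ B, y < N) :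
    lmax (A ++ N :: B) = lmax A + 1 := by
  unfold lmax
  rw [length_sw, countP_range_add]
  have h1 : (List.range A.length).countP
      (fun i => ((A ++ N :: B).take i).all (fun b => b < (A ++ N :: B).getD i 0)) =
      (List.range A.length).countP
      (fun i => (A.take i).all (fun b => b < A.getD i 0)) := by
    apply countP_range_congr
    intro i hi
    rw [getD_swL hi, List.take_append_of_le_length hi.le]
  have h2 : (List.range (B.length + 1)).countP
      (fun j => ((A ++ N :: B).take (A.length + j)).all
        (fun b => b < (A ++ N :: B).getD (A.length + j) 0)) = 1 := by
    rw [countP_range_succ_shift]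
    have hz : ((A ++ N :: B).take (A.length + 0)).all
        (fun b => b < (A ++ N :: B).getD (A.length + 0) 0) = true := by
      rw [getD_swR]
      simp only [Nat.add_zero, List.getD_cons_zero]
      rw [List.take_append_of_le_length le_rfl, List.take_length]
      exact List.all_eq_true.mpr (fun y hy => by simpa using hA y hy)
    rw [hz, if_pos rfl]
    have hzero : (List.range B.length).countP
        (fun j => ((A ++ N :: B).take (A.length + (j + 1))).all
          (fun b => b < (A ++ N :: B).getD (A.length + (j + 1)) 0)) = 0 := by
      apply countP_range_zero
      intro j hj
      rw [getD_swR, List.getD_cons_succ, List.take_length_add_append, Bool.eq_false_iff]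
      intro hall
      have hN : N ∈ A ++ List.take (j + 1) (N :: B) := by simp
      have := List.all_eq_true.mp hall N hN
      simp only [decide_eq_true_eq] at this
      have hBj : B.getD j 0 < N := by
        rw [List.getD_eq_getElem _ _ hj]
        exact hB _ (List.getElem_mem hj)
      omega
    omega
  rw [h1, h2]

lemma rmax_sandwich (A B : List ℕ) (N : ℕ) (hA : ∀ y ∈ A, y < N) (hB : ∀ y ∈ B, y < N) :
    rmax (A ++ N :: B) = 1 + rmax B := by
  unfold rmax
  rw [length_sw, countP_range_add]
  have h1 : (List.range A.length).countP
      (fun i => ((A ++ N :: B).drop (i + 1)).all (fun b => b < (A ++ N :: B).getD i 0)) = 0 := by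
    apply countP_range_zero
    intro i hi
    rw [getD_swL hi, List.drop_append_of_le_length hi, Bool.eq_false_iff]
    intro hall
    have hN : N ∈ A.drop (i + 1) ++ N :: B := by simp
    have := List.all_eq_true.mp hall N hN
    simp only [decide_eq_true_eq] at this
    have hAi : A.getD i 0 < N := by
      rw [List.getD_eq_getElem _ _ hi]
      exact hA _ (List.getElem_mem hi)
    omega
  have h2 : (List.range (B.length + 1)).countP
      (fun j => ((A ++ N :: B).drop (A.length + j + 1)).all
        (fun b => b < (A ++ N :: B).getD (A.length + j) 0)) =
      1 + (List.range B.length).countP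
        (fun j => (B.drop (j + 1)).all (fun b => b < B.getD j 0)) := by
    rw [countP_range_succ_shift]
    have hz : ((A ++ N :: B).drop (A.length + 0 + 1)).all
        (fun b => b < (A ++ N :: B).getD (A.length + 0) 0) = true := by
      rw [getD_swR]
      have : A.length + 0 + 1 = A.length + 1 := by omega
      rw [this, List.drop_length_add_append]
      simp only [Nat.add_zero, List.getD_cons_zero, List.drop_succ_cons, List.drop_zero]
      exact List.all_eq_true.mpr (fun y hy => by simpa using hB y hy)
    rw [hz, if_pos rfl]
    have hrest : (List.range B.length).countP
        (fun j => ((A ++ N :: B).drop (A.length + (j + 1) + 1)).all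
          (fun b => b < (A ++ N :: B).getD (A.length + (j + 1)) 0)) =
        (List.range B.length).countP
        (fun j => (B.drop (j + 1)).all (fun b => b < B.getD j 0)) := by
      apply countP_range_congr
      intro j hj
      rw [getD_swR, List.getD_cons_succ]
      have : A.length + (j + 1) + 1 = A.length + (j + 2) := by omega
      rw [this, List.drop_length_add_append]
      simp only [List.drop_succ_cons]
    rw [hrest]
  rw [h1, h2]
  omega

lemma asc_sandwich (A B : List ℕ) (N : ℕ) (hA : ∀ y ∈ A, y < N) (hB : ∀ y ∈ B, y < N)
    (hAne : A ≠ []) (hBne : B ≠ []) :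
    asc (A ++ N :: B) = asc A + 1 + asc B := by
  obtain ⟨nA, hnA⟩ : ∃ m, A.length = m + 1 :=
    ⟨A.length - 1, by have := List.length_pos_iff.mpr hAne; omega⟩
  obtain ⟨nB, hnB⟩ : ∃ m, B.length = m + 1 :=
    ⟨B.length - 1, by have := List.length_pos_iff.mpr hBne; omega⟩
  unfold asc
  rw [length_sw, hnA, hnB]
  have hlen : nA + 1 + (nB + 1 + 1) - 1 = nA + (nB + 2) := by omega
  rw [hlen, countP_range_add]
  have h1 : (List.range nA).countP
      (fun i => (A ++ N :: B).getD i 0 < (A ++ N :: B).getD (i + 1) 0) =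
      (List.range (A.length - 1)).countP (fun i => A.getD i 0 < A.getD (i + 1) 0) := by
    rw [hnA]
    simp only [Nat.add_sub_cancel]
    apply countP_range_congr
    intro i hi
    rw [getD_swL (by omega), getD_swL (by omega)]
  have h2 : (List.range (nB + 2)).countP
      (fun j => (A ++ N :: B).getD (nA + j) 0 < (A ++ N :: B).getD (nA + j + 1) 0) =
      1 + (List.range (B.length - 1)).countP (fun j => B.getD j 0 < B.getD (j + 1) 0) := by
    rw [countP_range_succ_shift]
    have hz : (decide ((A ++ N :: B).getD (nA + 0) 0 < (A ++ N :: B).getD (nA + 0 + 1) 0)) = true := by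
      have e1 : (A ++ N :: B).getD (nA + 0) 0 = A.getD nA 0 := getD_swL (by omega)
      have e2 : nA + 0 + 1 = A.length + 0 := by omega
      rw [e2, e1, getD_swR]
      simp only [List.getD_cons_zero, decide_eq_true_eq]
      have : A.getD nA 0 < N := by
        rw [List.getD_eq_getElem _ _ (by omega)]
        exact hA _ (List.getElem_mem (by omega))
      simpa using this
    rw [hz, if_pos rfl]
    rw [countP_range_succ_shift]
    have hz2 : (decide ((A ++ N :: B).getD (nA + (0 + 1)) 0 <
        (A ++ N :: B).getD (nA + (0 + 1) + 1) 0)) = false := by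
      have e1 : nA + (0 + 1) = A.length + 0 := by omega
      have e2 : nA + (0 + 1) + 1 = A.length + 1 := by omega
      rw [e2, e1]
      rw [getD_swR, getD_swR]
      simp only [List.getD_cons_zero, List.getD_cons_succ]
      have : B.getD 0 0 < N := by
        rw [List.getD_eq_getElem _ _ (by omega)]
        exact hB _ (List.getElem_mem (by omega))
      simp only [decide_eq_false_iff_not]
      omega
    rw [hz2, if_neg (by simp)]
    have hrest : (List.range nB).countP
        (fun j => (A ++ N :: B).getD (nA + (j + 1 + 1)) 0 <
          (A ++ N :: B).getD (nA + (j + 1 + 1) + 1) 0) =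
        (List.range nB).countP (fun j => B.getD j 0 < B.getD (j + 1) 0) := by
      apply countP_range_congr
      intro j hj
      have e1 : nA + (j + 1 + 1) = A.length + (j + 1) := by omega
      have e2 : nA + (j + 1 + 1) + 1 = A.length + (j + 2) := by omega
      rw [e2, e1, getD_swR, getD_swR]
      simp only [List.getD_cons_succ]
    rw [hrest, hnB]
    simp only [Nat.add_sub_cancel]
    omega
  rw [h1, h2, hnA, hnB]
  simp only [Nat.add_sub_cancel]
  omega

lemma des_sandwich (A B : List ℕ) (N : ℕ) (hA : ∀ y ∈ A, y < N) (hB : ∀ y ∈ B, y < N)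
    (hAne : A ≠ []) (hBne : B ≠ []) :
    des (A ++ N :: B) = des A + 1 + des B := by
  obtain ⟨nA, hnA⟩ : ∃ m, A.length = m + 1 :=
    ⟨A.length - 1, by have := List.length_pos_iff.mpr hAne; omega⟩
  obtain ⟨nB, hnB⟩ : ∃ m, B.length = m + 1 :=
    ⟨B.length - 1, by have := List.length_pos_iff.mpr hBne; omega⟩
  unfold des
  rw [length_sw, hnA, hnB]
  have hlen : nA + 1 + (nB + 1 + 1) - 1 = nA + (nB + 2) := by omega
  rw [hlen, countP_range_add]
  have h1 : (List.range nA).countP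
      (fun i => (A ++ N :: B).getD (i + 1) 0 < (A ++ N :: B).getD i 0) =
      (List.range (A.length - 1)).countP (fun i => A.getD (i + 1) 0 < A.getD i 0) := by
    rw [hnA]
    simp only [Nat.add_sub_cancel]
    apply countP_range_congr
    intro i hi
    rw [getD_swL (by omega), getD_swL (by omega)]
  have h2 : (List.range (nB + 2)).countP
      (fun j => (A ++ N :: B).getD (nA + j + 1) 0 < (A ++ N :: B).getD (nA + j) 0) =
      1 + (List.range (B.length - 1)).countP (fun j => B.getD (j + 1) 0 < B.getD j 0) := by
    rw [countP_range_succ_shift]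
    have hz : (decide ((A ++ N :: B).getD (nA + 0 + 1) 0 < (A ++ N :: B).getD (nA + 0) 0)) = false := by
      have e1 : (A ++ N :: B).getD (nA + 0) 0 = A.getD nA 0 := getD_swL (by omega)
      have e2 : nA + 0 + 1 = A.length + 0 := by omega
      rw [e2, e1, getD_swR]
      simp only [List.getD_cons_zero]
      have : A.getD nA 0 < N := by
        rw [List.getD_eq_getElem _ _ (by omega)]
        exact hA _ (List.getElem_mem (by omega))
      simp only [decide_eq_false_iff_not]
      omega
    rw [hz, if_neg (by simp)]
    rw [countP_range_succ_shift]
    have hz2 : (decide ((A ++ N :: B).getD (nA + (0 + 1) + 1) 0 <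
        (A ++ N :: B).getD (nA + (0 + 1)) 0)) = true := by
      have e1 : nA + (0 + 1) = A.length + 0 := by omega
      have e2 : nA + (0 + 1) + 1 = A.length + 1 := by omega
      rw [e2, e1, getD_swR, getD_swR]
      simp only [List.getD_cons_zero, List.getD_cons_succ]
      have : B.getD 0 0 < N := by
        rw [List.getD_eq_getElem _ _ (by omega)]
        exact hB _ (List.getElem_mem (by omega))
      simpa using this
    rw [hz2, if_pos rfl]
    have hrest : (List.range nB).countP
        (fun j => (A ++ N :: B).getD (nA + (j + 1 + 1) + 1) 0 <
          (A ++ N :: B).getD (nA + (j + 1 + 1)) 0) =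
        (List.range nB).countP (fun j => B.getD (j + 1) 0 < B.getD j 0) := by
      apply countP_range_congr
      intro j hj
      have e1 : nA + (j + 1 + 1) = A.length + (j + 1) := by omega
      have e2 : nA + (j + 1 + 1) + 1 = A.length + (j + 2) := by omega
      rw [e2, e1, getD_swR, getD_swR]
      simp only [List.getD_cons_succ]
    rw [hrest, hnB]
    simp only [Nat.add_sub_cancel]
    omega
  rw [h1, h2, hnA, hnB]
  simp only [Nat.add_sub_cancel]
  omega

def dp (u : List ℕ) (i : ℕ) : Bool :=
  (u.drop (i + 1)).any (fun b => b + 1 = u.getD i 0)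

lemma sldes_eq (l : List ℕ) : sldes l = (List.range (S l).length).countP (dp (S l)) := rfl

lemma dp_append_right (L M : List ℕ) (j : ℕ) : dp (L ++ M) (L.length + j) = dp M j := by
  unfold dp
  have h1 : L.length + j + 1 = L.length + (j + 1) := by omega
  rw [h1, List.drop_length_add_append,
    List.getD_append_right _ _ _ _ (Nat.le_add_right _ _), Nat.add_sub_cancel_left]

lemma isPermOf_facts {n : ℕ} {l : List ℕ} (h : IsPermOf n l) :
    l.length = n ∧ l.Nodup ∧ ∀ y ∈ l, 1 ≤ y ∧ y ≤ n := by
  have hlen : l.length = n := by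
    have := h.length_eq
    simpa [idPerm, List.length_range'] using this
  refine ⟨hlen, h.symm.nodup (List.nodup_range' (s := 1) (n := n)), fun y hy => ?_⟩
  have := h.mem_iff.mp hy
  rw [idPerm, List.mem_range'_1] at this
  omega

lemma S_max_last (l : List ℕ) (k : ℕ) (hne : l ≠ []) (hmem : k ∈ l) (hub : ∀ y ∈ l, y ≤ k) :
    ∃ w, S l = w ++ [k] := by
  rcases l with _ | ⟨x, t⟩
  · exact absurd rfl hne
  · rw [S_cons, foldr_max_eq hmem hub]
    exact ⟨_, rfl⟩

lemma lrm_spec {v : List ℕ} {i : ℕ} (hi1 : 1 ≤ i) (hi2 : i ≤ lmax v) :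
    ∃ j0, ∃ h : j0 < v.length, v[j0] = (lrMaxima v).getD (i - 1) 0 ∧
      ∀ p, p < j0 → ∀ hp : p < v.length, v[p] < v[j0] := by
  set q : ℕ → Bool := fun idx => (v.take idx).all (fun b => b < v.getD idx 0) with hq
  have hflen : ((List.range v.length).filter q).length = lmax v := by
    rw [lmax, List.countP_eq_length_filter]
  have hi' : i - 1 < ((List.range v.length).filter q).length := by omega
  set j0 := ((List.range v.length).filter q)[i - 1] with hj0def
  have hj0mem : j0 ∈ (List.range v.length).filter q := List.getElem_mem hi'
  have hj0r : j0 ∈ List.range v.length := (List.mem_filter.mp hj0mem).1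
  have hj0q : q j0 = true := (List.mem_filter.mp hj0mem).2
  have hj0lt : j0 < v.length := List.mem_range.mp hj0r
  refine ⟨j0, hj0lt, ?_, ?_⟩
  · rw [lrMaxima]
    rw [List.getD_eq_getElem _ _ (by rw [List.length_map]; exact hi'), List.getElem_map]
    rw [List.getD_eq_getElem _ _ hj0lt]
  · intro p hp hpv
    have hall := List.all_eq_true.mp hj0q
    have hmem : v[p] ∈ v.take j0 := by
      have hplen : p < (v.take j0).length := by rw [List.length_take]; omega
      have he : (v.take j0)[p] = v[p] := List.getElem_take
      rw [← he]
      exact List.getElem_mem hplen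
    have := hall _ hmem
    rw [List.getD_eq_getElem _ _ hj0lt] at this
    simpa using this

lemma not_mem_drop_of_lrmax {v : List ℕ} (hnd : v.Nodup) {j0 : ℕ} (hj0 : j0 < v.length)
    (hmax : ∀ p, p < j0 → ∀ hp : p < v.length, v[p] < v[j0])
    {j : ℕ} (hj : j < v.length) (hv : v[j] = v[j0] + 1) : v[j0] ∉ v.drop (j + 1) := by
  intro hmem
  obtain ⟨t, ht, hval⟩ := List.mem_iff_getElem.mp hmem
  rw [List.getElem_drop] at hval
  have hlt : j + 1 + t < v.length := by
    have : (v.drop (j + 1)).length = v.length - (j + 1) := List.length_drop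
    omega
  have heq : j + 1 + t = j0 := hnd.getElem_inj_iff.mp hval
  have hjlt : j < j0 := by omega
  have := hmax j hjlt hj
  omega

end Aux

/-- statistics of `C2(π1, π2, i)` for nonempty 2SSPs `π1 ∈ T_k`, `π2 ∈ T_ℓ`
and `1 ≤ i ≤ slmax(π2)`. -/
theorem C2_stats (k ℓ : ℕ) (hk : 0 < k) (hℓ : 0 < ℓ) (π1 π2 : List ℕ)
    (h1 : π1.length = k) (h1' : Is2SS π1) (h2 : π2.length = ℓ) (h2' : Is2SS π2)
    (i : ℕ) (hi1 : 1 ≤ i) (hi2 : i ≤ slmax π2) :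
    lmax (C2 π1 π2 i) = lmax π1 + 1 ∧
    rmax (C2 π1 π2 i) = 1 + rmax π2 ∧
    asc (C2 π1 π2 i) = asc π1 + 1 + asc π2 ∧
    des (C2 π1 π2 i) = des π1 + 1 + des π2 ∧
    (C2 π1 π2 i).length = π1.length + 1 + π2.length ∧
    sldes (C2 π1 π2 i) = sldes π1 + sldes π2 + 1 := by
  subst h1
  subst h2
  obtain ⟨hp1, -⟩ := h1'
  obtain ⟨hp2, -⟩ := h2'
  obtain ⟨-, hnd1, hmem1⟩ := isPermOf_facts hp1
  obtain ⟨-, hnd2, hmem2⟩ := isPermOf_facts hp2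
  set K := π1.length with hK
  set M := π2.length with hM
  set N := K + M + 1 with hN
  set a := lrm π2 i with ha
  -- facts about v1 = S π1, v2 = S π2
  have hv1p : (S π1).Perm π1 := S_perm π1
  have hv2p : (S π2).Perm π2 := S_perm π2
  have hv1len : (S π1).length = K := hv1p.length_eq
  have hv2len : (S π2).length = M := hv2p.length_eq
  have hv1mem : ∀ y ∈ S π1, 1 ≤ y ∧ y ≤ K := fun y hy => hmem1 y (hv1p.mem_iff.mp hy)
  have hv2mem : ∀ y ∈ S π2, 1 ≤ y ∧ y ≤ M := fun y hy => hmem2 y (hv2p.mem_iff.mp hy)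
  have hv1nd : (S π1).Nodup := hv1p.symm.nodup hnd1
  have hv2nd : (S π2).Nodup := hv2p.symm.nodup hnd2
  -- the left-to-right maximum a
  obtain ⟨j0, hj0, hj0v, hj0max⟩ := lrm_spec (v := S π2) hi1 hi2
  have hj0a : (S π2)[j0] = a := hj0v
  have hamem : a ∈ S π2 := hj0a ▸ List.getElem_mem hj0
  have hab : 1 ≤ a ∧ a ≤ M := hv2mem a hamem
  have hkey : ∀ j, (hj : j < (S π2).length) → (S π2)[j] = a + 1 →
      a ∉ (S π2).drop (j + 1) := by
    intro j hj hval
    have := not_mem_drop_of_lrmax hv2nd hj0 hj0max hj (by rw [hval, hj0a])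
    rwa [hj0a] at this
  -- the two strictly monotone relabeling maps
  set f : ℕ → ℕ := fun x => if x < K then x + 0 else x + a with hf
  set g : ℕ → ℕ := fun x => if x < a + 1 then x + (K - 1) else x + K with hg
  have hfmono : StrictMono f := by
    intro x y hxy
    simp only [hf]
    split_ifs <;> omega
  have hgmono : StrictMono g := by
    intro x y hxy
    simp only [hg]
    split_ifs <;> omega
  have hC : C2 π1 π2 i = π1.map f ++ N :: π2.map g := rfl
  have hfb : ∀ y ∈ π1.map f, y < N := by
    intro y hy
    obtain ⟨x, hx, rfl⟩ := List.mem_map.mp hy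
    have := hmem1 x hx
    simp only [hf]
    split_ifs <;> omega
  have hgb : ∀ y ∈ π2.map g, y < N := by
    intro y hy
    obtain ⟨x, hx, rfl⟩ := List.mem_map.mp hy
    have := hmem2 x hx
    simp only [hg]
    split_ifs <;> omega
  have hAne : π1.map f ≠ [] := by
    intro h
    have := congrArg List.length h
    simp only [List.length_map, List.length_nil] at this
    omega
  have hBne : π2.map g ≠ [] := by
    intro h
    have := congrArg List.length h
    simp only [List.length_map, List.length_nil] at this
    omega
  refine ⟨?_, ?_, ?_, ?_, ?_, ?_⟩
  · rw [hC, lmax_sandwich _ _ _ hfb hgb, lmax_map hfmono]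
  · rw [hC, rmax_sandwich _ _ _ hfb hgb, rmax_map hgmono]
  · rw [hC, asc_sandwich _ _ _ hfb hgb hAne hBne, asc_map hfmono, asc_map hgmono]
  · rw [hC, des_sandwich _ _ _ hfb hgb hAne hBne, des_map hfmono, des_map hgmono]
  · rw [hC]
    simp only [List.length_append, List.length_map, List.length_cons]
    omega
  -- sldes
  · have hSmain : S (C2 π1 π2 i) = (S π1).map f ++ ((S π2).map g ++ [N]) := by
      rw [hC, S_sandwich _ _ _ hfb hgb, S_map hfmono, S_map hgmono, List.append_assoc]
    set u := (S π1).map f ++ ((S π2).map g ++ [N]) with hu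
    have hulen : u.length = K + (M + 1) := by
      simp only [hu, List.length_append, List.length_map, List.length_cons,
        List.length_nil, hv1len, hv2len]
    have hlenf : ((S π1).map f).length = K := by rw [List.length_map, hv1len]
    have hleng : ((S π2).map g).length = M := by rw [List.length_map, hv2len]
    rw [sldes_eq, hSmain, hulen, countP_range_add]
    -- right part
    have hdpr : ∀ j, dp u (K + j) = dp ((S π2).map g ++ [N]) j := by
      intro j
      have := dp_append_right ((S π1).map f) ((S π2).map g ++ [N]) j
      rwa [hlenf] at this
    have hmid : ∀ j < M, dp ((S π2).map g ++ [N]) j = dp (S π2) j := by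
      intro j hj
      have hjv : j < (S π2).length := by omega
      unfold dp
      have hgetD : ((S π2).map g ++ [N]).getD j 0 = g ((S π2).getD j 0) := by
        rw [List.getD_append _ _ _ _ (by rw [hleng]; omega), getD_map_lt hjv]
      have hdrop : ((S π2).map g ++ [N]).drop (j + 1) =
          ((S π2).map g).drop (j + 1) ++ [N] :=
        List.drop_append_of_le_length (by rw [hleng]; omega)
      rw [hgetD, hdrop, List.any_append, ← List.map_drop, List.any_map]
      set y := (S π2).getD j 0 with hy
      have hyval : 1 ≤ y ∧ y ≤ M := by
        rw [hy, List.getD_eq_getElem _ _ hjv]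
        exact hv2mem _ (List.getElem_mem hjv)
      have hsing : ([N].any (fun b => b + 1 = g y)) = false := by
        simp only [List.any_cons, List.any_nil, Bool.or_false]
        apply decide_eq_false
        simp only [hg, hN]
        split_ifs <;> omega
      rw [hsing, Bool.or_false]
      apply Bool.coe_iff_coe.mp
      rw [List.any_eq_true, List.any_eq_true]
      constructor
      · rintro ⟨b, hb, hbe⟩
        refine ⟨b, hb, ?_⟩
        simp only [Function.comp, decide_eq_true_eq] at hbe ⊢
        simp only [hg] at hbe
        split_ifs at hbe <;> omega
      · rintro ⟨b, hb, hbe⟩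
        refine ⟨b, hb, ?_⟩
        simp only [decide_eq_true_eq] at hbe
        simp only [Function.comp, decide_eq_true_eq, hg]
        split_ifs with h1 h2 h2 <;> try omega
        · -- b < a + 1, ¬ y < a + 1 : forces b = a, y = a + 1, contradiction with hkey
          exfalso
          have hba : b = a := by omega
          have hya : y = a + 1 := by omega
          have hvja : (S π2)[j] = a + 1 := by
            rw [← hya, hy, List.getD_eq_getElem _ _ hjv]
          exact hkey j hjv hvja (hba ▸ hb)
    have hright : (List.range (M + 1)).countP (fun j => dp u (K + j)) = sldes π2 := by
      have e1 : (List.range (M + 1)).countP (fun j => dp u (K + j)) =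
          (List.range (M + 1)).countP (fun j => dp ((S π2).map g ++ [N]) j) :=
        countP_range_congr (fun j _ => hdpr j)
      rw [e1, countP_range_add]
      have e2 : (List.range 1).countP
          (fun j => dp ((S π2).map g ++ [N]) (M + j)) = 0 := by
        apply countP_range_zero
        intro j hj
        interval_cases j
        have := dp_append_right ((S π2).map g) [N] 0
        rw [hleng] at this
        rw [Nat.add_zero] at this ⊢
        rw [this]
        rfl
      have e3 : (List.range M).countP (fun j => dp ((S π2).map g ++ [N]) j) =
          (List.range M).countP (dp (S π2)) :=
        countP_range_congr (fun j hj => hmid j hj)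
      rw [e2, e3, sldes_eq, hv2len]
      omega
    -- left part
    have hKmem : K ∈ π1 := by
      apply hp1.mem_iff.mpr
      rw [idPerm, List.mem_range'_1]
      omega
    have hπ1ne : π1 ≠ [] := by
      intro h
      rw [h] at hKmem
      simp at hKmem
    obtain ⟨w1, hw1⟩ := S_max_last π1 K hπ1ne hKmem (fun y hy => (hmem1 y hy).2)
    have hw1len : w1.length + 1 = K := by
      have := congrArg List.length hw1
      rw [hv1len, List.length_append] at this
      simp at this
      omega
    have hKnotw1 : K ∉ w1 := by
      have hnd' : (w1 ++ [K]).Nodup := hw1 ▸ hv1nd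
      have := (List.perm_append_singleton K w1).nodup hnd'
      exact (List.nodup_cons.mp this).1
    have hlast : dp u w1.length = true := by
      unfold dp
      have hgetD : u.getD w1.length 0 = K + a := by
        rw [hu, List.getD_append _ _ _ _ (by rw [hlenf]; omega), getD_map_lt (by omega),
          hw1, List.getD_append_right _ _ _ _ le_rfl, Nat.sub_self, List.getD_cons_zero]
        simp only [hf]
        rw [if_neg (by omega)]
      have hdrop : u.drop (w1.length + 1) = (S π2).map g ++ [N] := by
        rw [hu, List.drop_append_of_le_length (by rw [hlenf]; omega),
          List.drop_eq_nil_of_le (by rw [hlenf]; omega), List.nil_append]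
      rw [hgetD, hdrop]
      apply List.any_eq_true.mpr
      refine ⟨g a, List.mem_append_left _ (List.mem_map_of_mem (f := g) hamem), ?_⟩
      simp only [decide_eq_true_eq, hg]
      rw [if_pos (by omega)]
      omega
    have hLclaim : ∀ idx < w1.length, dp u idx = dp (S π1) idx := by
      intro idx hidx
      have hidxv : idx < (S π1).length := by omega
      unfold dp
      have hx : (S π1).getD idx 0 = w1.getD idx 0 := by
        rw [hw1, List.getD_append _ _ _ _ hidx]
      have hxw : w1.getD idx 0 ∈ w1 := by
        rw [List.getD_eq_getElem _ _ hidx]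
        exact List.getElem_mem hidx
      have hxv1 : w1.getD idx 0 ∈ S π1 := by rw [hw1]; exact List.mem_append_left _ hxw
      have hxb : 1 ≤ w1.getD idx 0 ∧ w1.getD idx 0 ≤ K := hv1mem _ hxv1
      have hxK : w1.getD idx 0 < K := by
        rcases Nat.lt_or_ge (w1.getD idx 0) K with h | h
        · exact h
        · exact absurd (by omega : w1.getD idx 0 = K) (fun he => hKnotw1 (he ▸ hxw))
      set x := w1.getD idx 0 with hxd
      have hgetD : u.getD idx 0 = x := by
        rw [hu, List.getD_append _ _ _ _ (by rw [hlenf]; omega), getD_map_lt hidxv, hx]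
        simp only [hf]
        rw [if_pos hxK, Nat.add_zero]
      have hdrop : u.drop (idx + 1) =
          ((S π1).map f).drop (idx + 1) ++ ((S π2).map g ++ [N]) := by
        rw [hu]
        exact List.drop_append_of_le_length (by rw [hlenf]; omega)
      rw [hgetD, hdrop, List.any_append, List.any_append, ← List.map_drop, List.any_map,
        List.any_map, hx]
      have hX3 : ([N].any (fun b => b + 1 = x)) = false := by
        simp only [List.any_cons, List.any_nil, Bool.or_false]
        apply decide_eq_false
        omega
      have hX2 : ((S π2).any ((fun b => b + 1 = x) ∘ g)) = false := by
        apply Bool.eq_false_iff.mpr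
        intro hcon
        obtain ⟨b, hb, hbe⟩ := List.any_eq_true.mp hcon
        have hbb := hv2mem b hb
        simp only [Function.comp, decide_eq_true_eq, hg] at hbe
        split_ifs at hbe <;> omega
      rw [hX2, hX3, Bool.or_false, Bool.or_false]
      apply Bool.coe_iff_coe.mp
      rw [List.any_eq_true, List.any_eq_true]
      constructor
      · rintro ⟨b, hb, hbe⟩
        refine ⟨b, hb, ?_⟩
        have hbb := hv1mem b (List.mem_of_mem_drop hb)
        simp only [Function.comp, decide_eq_true_eq, hf] at hbe ⊢
        split_ifs at hbe <;> omega
      · rintro ⟨b, hb, hbe⟩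
        refine ⟨b, hb, ?_⟩
        simp only [decide_eq_true_eq] at hbe
        simp only [Function.comp, decide_eq_true_eq, hf]
        rw [if_pos (by omega)]
        omega
    have hleft : (List.range K).countP (dp u) = sldes π1 + 1 := by
      rw [← hw1len, List.range_succ, List.countP_append]
      have hsing : List.countP (dp u) [w1.length] = 1 := by
        simp [List.countP_cons, hlast]
      have hmain : (List.range w1.length).countP (dp u) =
          (List.range w1.length).countP (dp (S π1)) :=
        countP_range_congr (fun idx hidx => hLclaim idx hidx)
      have hs1 : sldes π1 = (List.range w1.length).countP (dp (S π1)) := by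
        rw [sldes_eq, hv1len, ← hw1len, List.range_succ, List.countP_append]
        have hzero : List.countP (dp (S π1)) [w1.length] = 0 := by
          have hdp : dp (S π1) w1.length = false := by
            unfold dp
            rw [List.drop_eq_nil_of_le (by omega)]
            rfl
          simp [List.countP_cons, hdp]
        omega
      rw [hmain, hsing, ← hs1]
    have hright' : (List.range (M + 1)).countP (fun j => dp u (K + j)) = sldes π2 := hright
    rw [hleft, hright']
    omega

end TSP
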